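/- The cyclic subgroup generated by g, i.e. the set of integer multiples {k • g : k ∈ ℤ}, is dense in X = ∏ i, ZMod (p i). -/

import Mathlib

/-- With `X = ∏ i, ZMod (p i)` (the `p i` pairwise distinct primes,
each factor discrete, `X` with the product topology) and `g ∈ X` the element all of
whose coordinates are `1`: the cyclic subgroup `{k • g : k ∈ ℤ}` generated by `g`
is dense in `X`. -/
theorem zmultiples_one_dense
    (p : ℕ → ℕ) (hp : ∀ i, (p i).Prime) (hinj : Function.Injective p)
    (g : ∀ i, ZMod (p i)) (hg : ∀ i, g i = 1) :
    Dense (Set.range fun k : ℤ => k • g) := by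
  rw [dense_iff_inter_open]
  intro U hU hUne
  obtain ⟨x, hx⟩ := hUne
  obtain ⟨I, u, hu, hsub⟩ := isOpen_pi_iff.mp hU x hx
  have copr : Pairwise (Function.onFun Nat.Coprime fun i : I => p i) := by
    intro a b hab
    exact (Nat.coprime_primes (hp a) (hp b)).mpr
      (fun h => hab (Subtype.ext (hinj h)))
  let e := ZMod.prodEquivPi (fun i : I => p i) copr
  obtain ⟨k, hk⟩ := ZMod.intCast_surjective (e.symm (fun i : I => x i))
  refine ⟨k • g, ?_, k, rfl⟩
  apply hsub
  intro i hi
  have key : (k • g) i = x i := by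
    have h1 : ((Pi.evalRingHom _ (⟨i, hi⟩ : I)).comp e.toRingHom)
        ((k : ℤ) : ZMod (∏ j : I, p j)) = ((k : ℤ) : ZMod (p i)) :=
      map_intCast _ _
    simp only [RingHom.comp_apply, RingEquiv.toRingHom_eq_coe, RingHom.coe_coe, hk,
      RingEquiv.apply_symm_apply, Pi.evalRingHom_apply] at h1
    rw [Pi.smul_apply, hg i, zsmul_one, ← h1]
  rw [key]
  exact (hu i hi).2
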